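/- Let q : Θ → [0, q̄] be weakly decreasing and let I ⊆ Θ be an interval. If 0 < q(θ) ≤ D̲(θ) for all θ ∈ I, then θ ↦ W̲(θ, q) is weakly decreasing on I. If, in addition, q is strictly decreasing on I and q(θ) < D̲(θ) for all θ ∈ I, then θ ↦ W̲(θ, q) is strictly decreasing on I. -/
import Mathlib


open MeasureTheory Set

noncomputable section

/-- The base environment: type space `Θ = [θl, θu]`, capacity `qbar`, lowest inverse
demand `Pl = P̲` (decreasing and continuous on `[0, qbar]` with `Pl 0 > θu`) and the
induced lowest demand `Dl = D̲`, with `Dl θl < qbar`. -/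
structure Env where
  θl : ℝ
  θu : ℝ
  qbar : ℝ
  Pl : ℝ → ℝ
  Dl : ℝ → ℝ
  θl_pos : 0 < θl
  θlu : θl < θu
  qbar_pos : 0 < qbar
  Pl_anti : StrictAntiOn Pl (Icc 0 qbar)
  Pl_cont : ContinuousOn Pl (Icc 0 qbar)
  Pl0 : θu < Pl 0
  Dl_inv : ∀ p, Pl qbar ≤ p → p ≤ Pl 0 → Dl p ∈ Icc (0:ℝ) qbar ∧ Pl (Dl p) = p
  Dl_high : ∀ p, Pl 0 < p → Dl p = 0
  Dl_low : ∀ p, p < Pl qbar → Dl p = qbar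
  Dl_lt : Dl θl < qbar

namespace Env

/-- The type space `Θ = [θl, θu]`. -/
def Θ (E : Env) : Set ℝ := Icc E.θl E.θu

/-- The lowest gross value function `V̲ (x) = ∫_0^x P̲`. -/
def Vl (E : Env) (x : ℝ) : ℝ := ∫ s in (0:ℝ)..x, E.Pl s

/-- `q_ℓ = D̲(θu)`: the efficient quantity at the lowest demand and highest cost. -/
def ql (E : Env) : ℝ := E.Dl E.θu

/-- `G* = V̲(q_ℓ) − θu · q_ℓ`: the maximal attainable guarantee. -/
def Gstar (E : Env) : ℝ := E.Vl E.ql - E.θu * E.ql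

/-- A feasible quantity schedule: weakly decreasing on `Θ`, valued in `[0, qbar]`. -/
def IsSchedule (E : Env) (q : ℝ → ℝ) : Prop :=
  AntitoneOn q E.Θ ∧ ∀ θ ∈ E.Θ, q θ ∈ Icc (0:ℝ) E.qbar

/-- `W̲(θ, q) = V̲(q(θ)) − θ q(θ) − ∫_θ^{θu} q`: ex-post welfare at the lowest demand
with zero rent for the highest type. -/
def Wl (E : Env) (q : ℝ → ℝ) (θ : ℝ) : ℝ :=
  E.Vl (q θ) - θ * q θ - ∫ y in θ..E.θu, q y

/-- An IC and IR (direct) quantity mechanism `(q, u)`. -/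
def IsMech (E : Env) (q u : ℝ → ℝ) : Prop :=
  E.IsSchedule q ∧ 0 ≤ u E.θu ∧
    ∀ θ ∈ E.Θ, u θ = u E.θu + ∫ y in θ..E.θu, q y

/-- The set `𝒱` of admissible gross value functions: integrals of decreasing continuous
inverse demands dominating `P̲` pointwise. -/
def IsValue (E : Env) (V : ℝ → ℝ) : Prop :=
  ∃ P : ℝ → ℝ, StrictAntiOn P (Icc 0 E.qbar) ∧ ContinuousOn P (Icc 0 E.qbar) ∧
    (∀ s ∈ Icc (0:ℝ) E.qbar, E.Pl s ≤ P s) ∧ ∀ x, V x = ∫ s in (0:ℝ)..x, P s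

/-- A Borel probability measure supported in `Θ` (the measure of a cdf `F ∈ 𝒻`). -/
def IsTech (E : Env) (μ : Measure ℝ) : Prop :=
  IsProbabilityMeasure μ ∧ μ (E.Θᶜ) = 0

/-- Ex-ante welfare `W(M; V, F)` of the mechanism `(q, u)` under value `V` and
cost technology `μ`. -/
def W (E : Env) (q u V : ℝ → ℝ) (μ : Measure ℝ) : ℝ :=
  ∫ θ, (V (q θ) - θ * q θ - u θ) ∂μ

/-- The welfare guarantee `G(M) = inf_{V ∈ 𝒱, F ∈ 𝒻} W(M; V, F)`. -/
def G (E : Env) (q u : ℝ → ℝ) : ℝ :=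
  sInf {w : ℝ | ∃ (V : ℝ → ℝ) (μ : Measure ℝ),
    E.IsValue V ∧ E.IsTech μ ∧ w = E.W q u V μ}

/-- The short list: IC and IR mechanisms with the highest guarantee. -/
def ShortList (E : Env) (q u : ℝ → ℝ) : Prop :=
  E.IsMech q u ∧ ∀ q' u' : ℝ → ℝ, E.IsMech q' u' → E.G q' u' ≤ E.G q u

/-- Feasibility in the program (ROPT): a schedule satisfying all robustness
constraints `W̲(θ, q) ≥ G*`. -/
def FeasibleROPT (E : Env) (q : ℝ → ℝ) : Prop :=
  E.IsSchedule q ∧ ∀ θ ∈ E.Θ, E.Gstar ≤ E.Wl q θ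

end Env

/-- A demand `D ∈ 𝒟`, bundled with the inverse demand `P` that induces it:
`P` decreasing and continuous on `[0, qbar]`, `P ≥ P̲` pointwise, `P 0 > θu`. -/
structure Demand (E : Env) where
  P : ℝ → ℝ
  D : ℝ → ℝ
  P_anti : StrictAntiOn P (Icc 0 E.qbar)
  P_cont : ContinuousOn P (Icc 0 E.qbar)
  P_ge : ∀ s ∈ Icc (0:ℝ) E.qbar, E.Pl s ≤ P s
  P0 : E.θu < P 0
  D_inv : ∀ p, P E.qbar ≤ p → p ≤ P 0 → D p ∈ Icc (0:ℝ) E.qbar ∧ P (D p) = p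
  D_high : ∀ p, P 0 < p → D p = 0
  D_low : ∀ p, p < P E.qbar → D p = E.qbar
  D_lt : D E.θl < E.qbar

namespace Demand

/-- The gross value function `V_D(x) = ∫_0^x P` induced by a demand `D ∈ 𝒟`. -/
def V {E : Env} (D : Demand E) (x : ℝ) : ℝ := ∫ s in (0:ℝ)..x, D.P s

end Demand

namespace Env

/-- The lowest demand `D̲` as an element of `𝒟`. -/
def DlDemand (E : Env) : Demand E where
  P := E.Pl
  D := E.Dl
  P_anti := E.Pl_anti
  P_cont := E.Pl_cont
  P_ge := fun _ _ => le_refl _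
  P0 := E.Pl0
  D_inv := E.Dl_inv
  D_high := E.Dl_high
  D_low := E.Dl_low
  D_lt := E.Dl_lt

/-- A price regulation `(p, t)`: nonnegative prices and transfers. -/
def IsPriceReg (E : Env) (p : ℝ → ℝ) (t : ℝ → Demand E → ℝ) : Prop :=
  (∀ θ ∈ E.Θ, 0 ≤ p θ) ∧ ∀ θ ∈ E.Θ, ∀ D : Demand E, 0 ≤ t θ D

/-- The rent `ũ(θ, D) = t(θ, D) − θ · D(p(θ))` of the monopolist. -/
def rent (E : Env) (p : ℝ → ℝ) (t : ℝ → Demand E → ℝ) (θ : ℝ) (D : Demand E) : ℝ :=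
  t θ D - θ * D.D (p θ)

/-- Ex-post incentive compatibility of a price regulation. -/
def EPIC (E : Env) (p : ℝ → ℝ) (t : ℝ → Demand E → ℝ) : Prop :=
  ∀ θ ∈ E.Θ, ∀ θ' ∈ E.Θ, ∀ D : Demand E,
    t θ' D - θ * D.D (p θ') ≤ E.rent p t θ D

/-- Ex-post individual rationality of a price regulation. -/
def EPIR (E : Env) (p : ℝ → ℝ) (t : ℝ → Demand E → ℝ) : Prop :=
  ∀ θ ∈ E.Θ, ∀ D : Demand E, 0 ≤ E.rent p t θ D

/-- Ex-post welfare `w̃(θ; D) = V_D(D(p(θ))) − θ·D(p(θ)) − ũ(θ, D)`. -/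
def wt (E : Env) (p : ℝ → ℝ) (t : ℝ → Demand E → ℝ) (θ : ℝ) (D : Demand E) : ℝ :=
  D.V (D.D (p θ)) - θ * D.D (p θ) - E.rent p t θ D

/-- Ex-ante welfare `W̃((p,t); D, F)` of a price regulation. -/
def Wt (E : Env) (p : ℝ → ℝ) (t : ℝ → Demand E → ℝ) (D : Demand E) (μ : Measure ℝ) : ℝ :=
  ∫ θ, E.wt p t θ D ∂μ

/-- The welfare guarantee `G̃((p,t)) = inf_{D ∈ 𝒟, F ∈ 𝒻} W̃((p,t); D, F)`. -/
def Gt (E : Env) (p : ℝ → ℝ) (t : ℝ → Demand E → ℝ) : ℝ :=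
  sInf {w : ℝ | ∃ (D : Demand E) (μ : Measure ℝ), E.IsTech μ ∧ w = E.Wt p t D μ}

/-- An EPIC and EPIR price regulation. -/
def IsAdmissiblePR (E : Env) (p : ℝ → ℝ) (t : ℝ → Demand E → ℝ) : Prop :=
  E.IsPriceReg p t ∧ E.EPIC p t ∧ E.EPIR p t

/-- The price short list: EPIC and EPIR price regulations with the highest guarantee. -/
def PriceShortList (E : Env) (p : ℝ → ℝ) (t : ℝ → Demand E → ℝ) : Prop :=
  E.IsAdmissiblePR p t ∧
    ∀ (p' : ℝ → ℝ) (t' : ℝ → Demand E → ℝ), E.IsAdmissiblePR p' t' → E.Gt p' t' ≤ E.Gt p t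

end Env

/-- The conjectured model: a regular cdf `F*` with density `f*` on `Θ`, and a
conjectured inverse demand `P*` (with induced demand `D*`) dominating `P̲`. -/
structure Model (E : Env) where
  Fstar : ℝ → ℝ
  fstar : ℝ → ℝ
  Pstar : ℝ → ℝ
  Dstar : ℝ → ℝ
  fstar_pos : ∀ θ ∈ E.Θ, 0 < fstar θ
  Fstar_ac : ∀ θ ∈ E.Θ, Fstar θ = ∫ y in E.θl..θ, fstar y
  Fstar_l : Fstar E.θl = 0
  Fstar_u : Fstar E.θu = 1
  zstar_cont : ContinuousOn (fun θ => θ + Fstar θ / fstar θ) E.Θ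
  zstar_mono : StrictMonoOn (fun θ => θ + Fstar θ / fstar θ) E.Θ
  Pstar_anti : StrictAntiOn Pstar (Icc 0 E.qbar)
  Pstar_cont : ContinuousOn Pstar (Icc 0 E.qbar)
  Pstar_ge : ∀ s ∈ Icc (0:ℝ) E.qbar, E.Pl s ≤ Pstar s
  Pstar0 : E.θu < Pstar 0
  Dstar_inv : ∀ p, Pstar E.qbar ≤ p → p ≤ Pstar 0 →
    Dstar p ∈ Icc (0:ℝ) E.qbar ∧ Pstar (Dstar p) = p
  Dstar_high : ∀ p, Pstar 0 < p → Dstar p = 0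
  Dstar_low : ∀ p, p < Pstar E.qbar → Dstar p = E.qbar
  Dstar_lt : Dstar E.θl < E.qbar

namespace Model

variable {E : Env} (Mo : Model E)

/-- The virtual cost `z*(θ) = θ + F*(θ)/f*(θ)`. -/
def zstar (θ : ℝ) : ℝ := θ + Mo.Fstar θ / Mo.fstar θ

/-- The conjectured gross value function `V*(x) = ∫_0^x P*`. -/
def Vstar (x : ℝ) : ℝ := ∫ s in (0:ℝ)..x, Mo.Pstar s

/-- The Baron–Myerson schedule `q^BM(θ) = D*(z*(θ))`. -/
def qBM (θ : ℝ) : ℝ := Mo.Dstar (Mo.zstar θ)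

/-- The Baron–Myerson-with-quantity-floor schedule `q*(θ) = max{q^BM(θ), q_ℓ}`. -/
def qstar (θ : ℝ) : ℝ := max (Mo.qBM θ) E.ql

/-- The objective of (ROPT): expected virtual surplus under the conjectured model. -/
def J (q : ℝ → ℝ) : ℝ :=
  ∫ θ in E.θl..E.θu, (Mo.Vstar (q θ) - Mo.zstar θ * q θ) * Mo.fstar θ

/-- `q` solves the program (ROPT). -/
def SolvesROPT (q : ℝ → ℝ) : Prop :=
  E.FeasibleROPT q ∧ ∀ q' : ℝ → ℝ, E.FeasibleROPT q' → Mo.J q' ≤ Mo.J q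

/-- `θ*`: the unique solution of `q^BM(θ*) = q_ℓ` in `Θ` when `q^BM(θu) < q_ℓ`;
otherwise `θ* = θu`. -/
def IsThetaStar (θs : ℝ) : Prop :=
  (Mo.qBM E.θu < E.ql ∧ θs ∈ E.Θ ∧ Mo.qBM θs = E.ql) ∨
    (E.ql ≤ Mo.qBM E.θu ∧ θs = E.θu)

/-- `θ^m`: the largest minimizer of `W̲(·, q*)` over `Θ`. -/
def IsThetaM (θm : ℝ) : Prop :=
  θm ∈ E.Θ ∧ (∀ θ' ∈ E.Θ, E.Wl Mo.qstar θm ≤ E.Wl Mo.qstar θ') ∧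
    ∀ θ ∈ E.Θ, (∀ θ' ∈ E.Θ, E.Wl Mo.qstar θ ≤ E.Wl Mo.qstar θ') → θ ≤ θm

/-- The conjectured demand `D*` as an element of `𝒟`. -/
def DstarDemand : Demand E where
  P := Mo.Pstar
  D := Mo.Dstar
  P_anti := Mo.Pstar_anti
  P_cont := Mo.Pstar_cont
  P_ge := Mo.Pstar_ge
  P0 := Mo.Pstar0
  D_inv := Mo.Dstar_inv
  D_high := Mo.Dstar_high
  D_low := Mo.Dstar_low
  D_lt := Mo.Dstar_lt

/-- Expected welfare `W((q,u); V*, F*)` of a quantity mechanism under the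
conjectured model. -/
def WStar (q u : ℝ → ℝ) : ℝ :=
  ∫ θ in E.θl..E.θu, (Mo.Vstar (q θ) - θ * q θ - u θ) * Mo.fstar θ

/-- Expected welfare `W̃((p,t); D*, F*)` of a price regulation under the
conjectured model. -/
def WtStar (p : ℝ → ℝ) (t : ℝ → Demand E → ℝ) : ℝ :=
  ∫ θ in E.θl..E.θu, E.wt p t θ Mo.DstarDemand * Mo.fstar θ

/-- A robustly optimal price regulation: in the price short list, and maximizing
expected welfare under the conjectured model over the price short list. -/
def RobustlyOptimalPR (p : ℝ → ℝ) (t : ℝ → Demand E → ℝ) : Prop :=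
  E.PriceShortList p t ∧
    ∀ (p' : ℝ → ℝ) (t' : ℝ → Demand E → ℝ), E.PriceShortList p' t' →
      Mo.WtStar p' t' ≤ Mo.WtStar p t

/-- A Baron–Myerson-with-price-cap regulation. -/
def IsBMPriceCap (p : ℝ → ℝ) (t : ℝ → Demand E → ℝ) : Prop :=
  E.IsAdmissiblePR p t ∧
  (∀ θ ∈ E.Θ, p θ = min (Mo.zstar θ) E.θu) ∧
  (∀ θ ∈ E.Θ, ∀ D : Demand E,
    E.rent p t θ D = E.rent p t E.θu D + ∫ y in θ..E.θu, D.D (p y)) ∧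
  (∀ D : Demand E, D ≠ E.DlDemand → D ≠ Mo.DstarDemand →
    0 ≤ E.rent p t E.θu D ∧
      E.rent p t E.θu D ≤ D.V (D.D E.θu) - E.θu * D.D E.θu - E.Gstar) ∧
  E.rent p t E.θu E.DlDemand = 0 ∧ E.rent p t E.θu Mo.DstarDemand = 0

end Model

lemma Env.le_Pl_of_le_Dl (E : Env) {q : ℝ → ℝ} (hq : E.IsSchedule q) {θ : ℝ}
    (hθ : θ ∈ E.Θ) (h : q θ ≤ E.Dl θ) : θ ≤ E.Pl (q θ) := by
  have hqm : q θ ∈ Icc (0:ℝ) E.qbar := hq.2 θ hθ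
  have hθu : θ < E.Pl 0 := lt_of_le_of_lt hθ.2 E.Pl0
  rcases lt_or_ge θ (E.Pl E.qbar) with hc | hc
  · have h2 : E.Pl E.qbar ≤ E.Pl (q θ) :=
      E.Pl_anti.antitoneOn hqm (right_mem_Icc.mpr E.qbar_pos.le) hqm.2
    linarith
  · obtain ⟨hDm, hPD⟩ := E.Dl_inv θ hc hθu.le
    have h2 : E.Pl (E.Dl θ) ≤ E.Pl (q θ) := E.Pl_anti.antitoneOn hqm hDm h
    linarith

lemma Env.lt_Pl_of_lt_Dl (E : Env) {q : ℝ → ℝ} (hq : E.IsSchedule q) {θ : ℝ}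
    (hθ : θ ∈ E.Θ) (h : q θ < E.Dl θ) : θ < E.Pl (q θ) := by
  have hqm : q θ ∈ Icc (0:ℝ) E.qbar := hq.2 θ hθ
  have hθu : θ < E.Pl 0 := lt_of_le_of_lt hθ.2 E.Pl0
  rcases lt_or_ge θ (E.Pl E.qbar) with hc | hc
  · rcases eq_or_lt_of_le hqm.2 with he | hlt
    · rw [he]; exact hc
    · have h2 : E.Pl E.qbar < E.Pl (q θ) :=
        E.Pl_anti hqm (right_mem_Icc.mpr E.qbar_pos.le) hlt
      linarith
  · obtain ⟨hDm, hPD⟩ := E.Dl_inv θ hc hθu.le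
    have h2 : E.Pl (E.Dl θ) < E.Pl (q θ) := E.Pl_anti hqm hDm h
    linarith

lemma Env.Wl_step (E : Env) {q : ℝ → ℝ} (hq : E.IsSchedule q) {a b : ℝ}
    (ha : a ∈ E.Θ) (hb : b ∈ E.Θ) (hab : a ≤ b) :
    E.Wl q b - E.Wl q a ≤ (b - E.Pl (q a)) * (q a - q b) := by
  have hA : q a ∈ Icc (0:ℝ) E.qbar := hq.2 a ha
  have hB : q b ∈ Icc (0:ℝ) E.qbar := hq.2 b hb
  have hBA : q b ≤ q a := hq.1 ha hb hab
  -- integrability of q on [a,b] and [b, θu]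
  have hqab : IntervalIntegrable q volume a b := by
    apply AntitoneOn.intervalIntegrable
    rw [uIcc_of_le hab]
    exact hq.1.mono (Icc_subset_Icc ha.1 hb.2)
  have hqbu : IntervalIntegrable q volume b E.θu := by
    apply AntitoneOn.intervalIntegrable
    rw [uIcc_of_le hb.2]
    exact hq.1.mono (Icc_subset_Icc hb.1 le_rfl)
  -- split the integral
  have hsplit : (∫ y in a..b, q y) + (∫ y in b..E.θu, q y) = ∫ y in a..E.θu, q y :=
    intervalIntegral.integral_add_adjacent_intervals hqab hqbu
  -- integrability of Pl
  have hPint : ∀ x y : ℝ, x ∈ Icc (0:ℝ) E.qbar → y ∈ Icc (0:ℝ) E.qbar →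
      IntervalIntegrable E.Pl volume x y := by
    intro x y hx hy
    apply ContinuousOn.intervalIntegrable
    apply E.Pl_cont.mono
    rw [uIcc_comm]
    exact uIcc_subset_Icc hy hx
  have hVsplit : (∫ s in (0:ℝ)..(q b), E.Pl s) + (∫ s in (q b)..(q a), E.Pl s)
      = ∫ s in (0:ℝ)..(q a), E.Pl s :=
    intervalIntegral.integral_add_adjacent_intervals
      (hPint 0 (q b) (left_mem_Icc.mpr E.qbar_pos.le) hB) (hPint _ _ hB hA)
  -- lower bound for ∫ Pl on [q b, q a]
  have hPbound : (q a - q b) * E.Pl (q a) ≤ ∫ s in (q b)..(q a), E.Pl s := by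
    have h1 : (∫ _s in (q b)..(q a), E.Pl (q a)) ≤ ∫ s in (q b)..(q a), E.Pl s := by
      apply intervalIntegral.integral_mono_on hBA intervalIntegrable_const
        (hPint _ _ hB hA)
      intro s hs
      exact E.Pl_anti.antitoneOn ⟨le_trans hB.1 hs.1, le_trans hs.2 hA.2⟩ hA hs.2
    simpa using h1
  -- upper bound for ∫ q on [a, b]
  have hqbound : (∫ y in a..b, q y) ≤ (b - a) * q a := by
    have h1 : (∫ y in a..b, q y) ≤ ∫ _y in a..b, q a := by
      apply intervalIntegral.integral_mono_on hab hqab intervalIntegrable_const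
      intro y hy
      exact hq.1 ha ⟨le_trans ha.1 hy.1, le_trans hy.2 hb.2⟩ hy.1
    simpa using h1
  simp only [Env.Wl, Env.Vl]
  nlinarith [hsplit, hVsplit, hPbound, hqbound]

lemma Env.Wl_anti_aux (E : Env) {q : ℝ → ℝ} (hq : E.IsSchedule q)
    {I : Set ℝ} (hIsub : I ⊆ E.Θ) (hIconn : I.OrdConnected)
    (hpt : ∀ θ ∈ I, q θ ≤ E.Dl θ) :
    AntitoneOn (fun θ => E.Wl q θ) I := by
  intro a ha b hb hab
  have hIcc : Icc a b ⊆ I := hIconn.out ha hb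
  simp only
  have key : ∀ n : ℕ, 0 < n →
      E.Wl q b - E.Wl q a ≤ ((b - a) * (q a - q b)) / n := by
    intro n hn
    have hn' : (0:ℝ) < n := by exact_mod_cast hn
    set δ := b - a with hδ
    have hδ0 : 0 ≤ δ := by simp [hδ]; linarith
    set t : ℕ → ℝ := fun i => a + i * δ / n with ht
    clear_value δ t
    have hmem : ∀ i ≤ n, t i ∈ Icc a b := by
      intro i hi
      have hiR : (i:ℝ) ≤ n := by exact_mod_cast hi
      constructor
      · have h0 : (0:ℝ) ≤ i * δ / n := by positivity
        simp only [ht]; linarith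
      · have h1 : (i:ℝ) * δ / n ≤ δ := by
          rw [div_le_iff₀ hn']
          nlinarith
        simp only [ht]; linarith
    have ht0 : t 0 = a := by simp [ht]
    have htn : t n = b := by
      simp only [ht]
      rw [mul_comm, mul_div_assoc, div_self hn'.ne', mul_one, hδ]
      ring
    have hstep : ∀ i : ℕ, t (i+1) - t i = δ / n := by
      intro i
      simp only [ht]
      push_cast
      ring
    have hmono : ∀ i : ℕ, t i ≤ t (i+1) := by
      intro i
      have := hstep i
      have : (0:ℝ) ≤ δ / n := by positivity
      linarith [hstep i]
    have hsum := Finset.sum_range_sub (fun i => E.Wl q (t i)) n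
    have hsum2 := Finset.sum_range_sub' (fun i => q (t i)) n
    have hbound : ∀ i ∈ Finset.range n,
        E.Wl q (t (i+1)) - E.Wl q (t i) ≤ (δ / n) * (q (t i) - q (t (i+1))) := by
      intro i hi
      rw [Finset.mem_range] at hi
      have h1 : t i ∈ I := hIcc (hmem i hi.le)
      have h2 : t (i+1) ∈ I := hIcc (hmem (i+1) hi)
      have hle := hmono i
      have hb1 := E.Wl_step hq (hIsub h1) (hIsub h2) hle
      have hkey := E.le_Pl_of_le_Dl hq (hIsub h1) (hpt _ h1)
      have hqm : q (t (i+1)) ≤ q (t i) := hq.1 (hIsub h1) (hIsub h2) hle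
      have h3 : t (i+1) - E.Pl (q (t i)) ≤ δ / n := by
        have := hstep i; linarith
      calc E.Wl q (t (i+1)) - E.Wl q (t i)
          ≤ (t (i+1) - E.Pl (q (t i))) * (q (t i) - q (t (i+1))) := hb1
        _ ≤ (δ / n) * (q (t i) - q (t (i+1))) :=
            mul_le_mul_of_nonneg_right h3 (by linarith)
    calc E.Wl q b - E.Wl q a
        = ∑ i ∈ Finset.range n, (E.Wl q (t (i+1)) - E.Wl q (t i)) := by
          rw [hsum, ht0, htn]
      _ ≤ ∑ i ∈ Finset.range n, (δ / n) * (q (t i) - q (t (i+1))) :=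
          Finset.sum_le_sum hbound
      _ = (δ / n) * ∑ i ∈ Finset.range n, (q (t i) - q (t (i+1))) := by
          rw [Finset.mul_sum]
      _ = (δ / n) * (q a - q b) := by rw [hsum2, ht0, htn]
      _ = δ * (q a - q b) / n := by ring
  have hlim : Filter.Tendsto (fun n : ℕ => ((b - a) * (q a - q b)) / n)
      Filter.atTop (nhds 0) := tendsto_const_div_atTop_nhds_zero_nat _
  have hle0 : E.Wl q b - E.Wl q a ≤ 0 :=
    ge_of_tendsto hlim (Filter.eventually_atTop.mpr ⟨1, fun n hn => key n hn⟩)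
  linarith

/-- Lemma (monotonicity, part A): if `0 < q ≤ D̲` on an interval `I ⊆ Θ`, then
`W̲(·, q)` is weakly decreasing on `I`; if moreover `q` is strictly decreasing on `I`
with `q < D̲` there, then `W̲(·, q)` is strictly decreasing on `I`. -/
theorem Wl_antitone_on (E : Env) (q : ℝ → ℝ) (hq : E.IsSchedule q)
    (I : Set ℝ) (hIsub : I ⊆ E.Θ) (hIconn : I.OrdConnected) :
    ((∀ θ ∈ I, 0 < q θ ∧ q θ ≤ E.Dl θ) → AntitoneOn (fun θ => E.Wl q θ) I) ∧
    ((∀ θ ∈ I, 0 < q θ ∧ q θ < E.Dl θ) → StrictAntiOn q I →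
      StrictAntiOn (fun θ => E.Wl q θ) I) := by
  constructor
  · intro hpt
    exact E.Wl_anti_aux hq hIsub hIconn (fun θ hθ => (hpt θ hθ).2)
  · intro hpt hstrict a ha b hb hab
    have hkey : a < E.Pl (q a) := E.lt_Pl_of_lt_Dl hq (hIsub ha) (hpt a ha).2
    set c := min b ((a + E.Pl (q a)) / 2) with hc
    have hac : a < c := lt_min hab (by linarith)
    have hcb : c ≤ b := min_le_left _ _
    have hcI : c ∈ I := hIconn.out ha hb ⟨hac.le, hcb⟩
    have hcP : c < E.Pl (q a) := lt_of_le_of_lt (min_le_right _ _) (by linarith)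
    have hqc : q c < q a := hstrict ha hcI hac
    have h1 := E.Wl_step hq (hIsub ha) (hIsub hcI) hac.le
    have h2 : (c - E.Pl (q a)) * (q a - q c) < 0 :=
      mul_neg_of_neg_of_pos (by linarith) (by linarith)
    have h3 : E.Wl q c < E.Wl q a := by linarith
    have h4 : E.Wl q b ≤ E.Wl q c :=
      E.Wl_anti_aux hq hIsub hIconn (fun θ hθ => (hpt θ hθ).2.le) hcI hb hcb
    exact lt_of_le_of_lt h4 h3
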